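/- Fix a quaternion p lying in the slice ℝ + Iℝ and a quaternion q = x + Jy with J ∈ 𝕊 and y ∈ ℝ. Set z = x + Iy. Then for every n ∈ ℕ, the quaternion w(n) := ((1 - JI)/2)(z - p)ⁿ + ((1 + JI)/2)(z̄ - p)ⁿ (where z̄ = x - Iy) satisfies |w(n)| ≤ max(|z - p|, |z̄ - p|)ⁿ. -/

import Mathlib

open Quaternion

lemma sps_re_eq_zero_of_sq_neg_one (I : ℍ[ℝ]) (hI : I ^ 2 = -1) : I.re = 0 := by
  rw [sq] at hI
  have h0 := congrArg QuaternionAlgebra.re hI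
  have h1 := congrArg QuaternionAlgebra.imI hI
  have h2 := congrArg QuaternionAlgebra.imJ hI
  have h3 := congrArg QuaternionAlgebra.imK hI
  simp [Quaternion.re_mul, Quaternion.imI_mul, Quaternion.imJ_mul, Quaternion.imK_mul]
    at h0 h1 h2 h3
  nlinarith [sq_nonneg I.re, sq_nonneg I.imI, sq_nonneg I.imJ, sq_nonneg I.imK,
    sq_nonneg (I.re*I.imI), sq_nonneg (I.re*I.imJ), sq_nonneg (I.re*I.imK)]

lemma sps_norm_one_of_sq_neg_one (I : ℍ[ℝ]) (hI : I ^ 2 = -1) :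
    I.imI^2 + I.imJ^2 + I.imK^2 = 1 := by
  have hi0 := sps_re_eq_zero_of_sq_neg_one I hI
  rw [sq] at hI
  have h0 := congrArg QuaternionAlgebra.re hI
  simp [Quaternion.re_mul, hi0] at h0
  nlinarith [h0]

set_option maxHeartbeats 1000000 in
lemma sps_key (I J : ℍ[ℝ]) (hI : I ^ 2 = -1) (hJ : J ^ 2 = -1) (cα dα cβ dβ : ℝ) :
    ‖(1 - J * I) / 2 * ((cα:ℍ[ℝ]) + dα • I) + (1 + J * I) / 2 * ((cβ:ℍ[ℝ]) + dβ • I)‖ ≤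
      max ‖(cα:ℍ[ℝ]) + dα • I‖ ‖(cβ:ℍ[ℝ]) + dβ • I‖ := by
  have hi0 := sps_re_eq_zero_of_sq_neg_one I hI
  have hj0 := sps_re_eq_zero_of_sq_neg_one J hJ
  have hIn := sps_norm_one_of_sq_neg_one I hI
  have hJn := sps_norm_one_of_sq_neg_one J hJ
  set α : ℍ[ℝ] := (cα:ℍ[ℝ]) + dα • I with hα
  set β : ℍ[ℝ] := (cβ:ℍ[ℝ]) + dβ • I with hβ
  set W : ℍ[ℝ] := (1 - J * I) * α + (1 + J * I) * β with hWdef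
  -- rewrite LHS as 2⁻¹ • W
  have htwo : ((2:ℝ) : ℍ[ℝ]) = (2 : ℍ[ℝ]) := by norm_cast
  have hhalf : ∀ a b : ℍ[ℝ], a / 2 * b = ((2:ℝ)⁻¹) • (a * b) := by
    intro a b
    rw [div_eq_mul_inv, ← htwo, ← Quaternion.coe_inv, mul_assoc,
      Quaternion.coe_commutes, ← mul_assoc, Quaternion.mul_coe_eq_smul]
  have hLHS : (1 - J * I) / 2 * α + (1 + J * I) / 2 * β = ((2:ℝ)⁻¹) • W := by
    rw [hWdef, hhalf, hhalf, smul_add]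
  rw [hLHS]
  have hE : normSq W = (2 - 2*(J*I).re) * normSq α + (2 + 2*(J*I).re) * normSq β := by
    rw [hWdef, hα, hβ]
    simp only [Quaternion.normSq_def', Quaternion.re_add, Quaternion.imI_add, Quaternion.imJ_add,
      Quaternion.imK_add, Quaternion.re_sub, Quaternion.imI_sub, Quaternion.imJ_sub,
      Quaternion.imK_sub, Quaternion.re_mul, Quaternion.imI_mul, Quaternion.imJ_mul,
      Quaternion.imK_mul, Quaternion.re_one, Quaternion.imI_one, Quaternion.imJ_one,
      Quaternion.imK_one, Quaternion.re_smul, Quaternion.imI_smul, Quaternion.imJ_smul,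
      Quaternion.imK_smul, Quaternion.re_coe, Quaternion.imI_coe, Quaternion.imJ_coe,
      Quaternion.imK_coe, smul_eq_mul, hi0, hj0, mul_zero, zero_mul, add_zero, zero_add,
      sub_zero, zero_sub, mul_one, one_mul, neg_zero, mul_neg, neg_neg]
    linear_combination
      ((J.imI^2+J.imJ^2+J.imK^2) * ((cα-cβ)^2 + (dα-dβ)^2)
        + ((I.imI^2+I.imJ^2+I.imK^2) * (J.imI^2+J.imJ^2+J.imK^2) - 1) * (dα-dβ)^2) * hIn
      + ((cα-cβ)^2 + (dα-dβ)^2) * hJn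
  have hr2 : (2*(J*I).re)^2 ≤ 4 := by
    simp only [Quaternion.re_mul, hi0, hj0, mul_zero, zero_mul, sub_zero, zero_sub]
    nlinarith [sq_nonneg (I.imI*J.imJ - I.imJ*J.imI), sq_nonneg (I.imI*J.imK - I.imK*J.imI),
      sq_nonneg (I.imJ*J.imK - I.imK*J.imJ), hIn, hJn]
  have hnα : normSq α = ‖α‖ * ‖α‖ := normSq_eq_norm_mul_self α
  have hnβ : normSq β = ‖β‖ * ‖β‖ := normSq_eq_norm_mul_self β
  have hnW : normSq W = ‖W‖ * ‖W‖ := normSq_eq_norm_mul_self W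
  set M := max ‖α‖ ‖β‖ with hM
  have hM0 : (0:ℝ) ≤ M := le_trans (norm_nonneg α) (le_max_left _ _)
  have hαM : ‖α‖ ≤ M := le_max_left _ _
  have hβM : ‖β‖ ≤ M := le_max_right _ _
  have h2r : 0 ≤ 2 - 2*(J*I).re := by nlinarith [hr2]
  have h2r' : 0 ≤ 2 + 2*(J*I).re := by nlinarith [hr2]
  have hW2 : ‖W‖ * ‖W‖ ≤ 4 * (M * M) := by
    nlinarith [mul_nonneg h2r (sub_nonneg.2 (mul_le_mul hαM hαM (norm_nonneg α) hM0)),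
      mul_nonneg h2r' (sub_nonneg.2 (mul_le_mul hβM hβM (norm_nonneg β) hM0))]
  have hWM : ‖W‖ ≤ 2 * M := by
    nlinarith [norm_nonneg W, hM0, hW2]
  have : ‖((2:ℝ)⁻¹) • W‖ = (2:ℝ)⁻¹ * ‖W‖ := by
    rw [norm_smul]; simp
  rw [this]
  linarith

theorem star_power_estimate (I J : ℍ[ℝ]) (hI : I ^ 2 = -1) (hJ : J ^ 2 = -1)
    (px py x y : ℝ) (p z zb : ℍ[ℝ])
    (hp : p = (px : ℍ[ℝ]) + py • I)
    (hz : z = (x : ℍ[ℝ]) + y • I) (hzb : zb = (x : ℍ[ℝ]) - y • I) :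
    ∀ n : ℕ,
      ‖((1 - J * I) / 2) * (z - p) ^ n + ((1 + J * I) / 2) * (zb - p) ^ n‖ ≤
        (max ‖z - p‖ ‖zb - p‖) ^ n := by
  intro n
  have hII : I * I = -1 := by rw [← sq]; exact hI
  -- powers of elements of ℝ + ℝI stay in ℝ + ℝI
  have hmul : ∀ a b a' b' : ℝ, ((a:ℍ[ℝ]) + b • I) * ((a':ℍ[ℝ]) + b' • I) =
      ((a*a' - b*b' : ℝ):ℍ[ℝ]) + (a*b' + b*a') • I := by
    intro a b a' b'
    have e1 : (a:ℍ[ℝ]) * (b' • I) = (a*b') • I := by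
      rw [Quaternion.coe_mul_eq_smul, smul_smul]
    have e2 : (b • I) * (a':ℍ[ℝ]) = (b*a') • I := by
      rw [Quaternion.mul_coe_eq_smul, smul_smul, mul_comm a' b]
    have e3 : (b • I) * (b' • I) = -(((b*b' : ℝ)):ℍ[ℝ]) := by
      rw [smul_mul_assoc, mul_smul_comm, smul_smul, hII,
        show (-1 : ℍ[ℝ]) = ((-1:ℝ):ℍ[ℝ]) by norm_cast, Quaternion.smul_coe]
      push_cast
      rw [mul_neg_one]
    calc ((a:ℍ[ℝ]) + b • I) * ((a':ℍ[ℝ]) + b' • I)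
        = (a:ℍ[ℝ]) * (a':ℍ[ℝ]) + (a:ℍ[ℝ]) * (b' • I) + ((b • I) * (a':ℍ[ℝ]) + (b • I) * (b' • I)) := by
          rw [add_mul, mul_add, mul_add]
      _ = ((a*a' - b*b' : ℝ):ℍ[ℝ]) + (a*b' + b*a') • I := by
          rw [e1, e2, e3, ← Quaternion.coe_mul]
          push_cast
          module
  have hpow : ∀ (c d : ℝ) (m : ℕ), ∃ c' d' : ℝ,
      ((c:ℍ[ℝ]) + d • I) ^ m = (c':ℍ[ℝ]) + d' • I := by
    intro c d m
    induction m with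
    | zero => exact ⟨1, 0, by simp⟩
    | succ k ih =>
      obtain ⟨c', d', h⟩ := ih
      exact ⟨c'*c - d'*d, c'*d + d'*c, by rw [pow_succ, h, hmul]⟩
  have hzp : z - p = ((x - px : ℝ):ℍ[ℝ]) + (y - py) • I := by
    rw [hz, hp]; push_cast; module
  have hzbp : zb - p = ((x - px : ℝ):ℍ[ℝ]) + (-y - py) • I := by
    rw [hzb, hp]; push_cast; module
  obtain ⟨c1, d1, h1⟩ := hpow (x - px) (y - py) n
  obtain ⟨c2, d2, h2⟩ := hpow (x - px) (-y - py) n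
  have key := sps_key I J hI hJ c1 d1 c2 d2
  rw [hzp, hzbp, h1, h2]
  refine le_trans key ?_
  rw [← h1, ← h2, norm_pow, norm_pow]
  rcases le_total ‖((x - px : ℝ):ℍ[ℝ]) + (y - py) • I‖ ‖((x - px : ℝ):ℍ[ℝ]) + (-y - py) • I‖
    with h | h
  · rw [max_eq_right h, max_eq_right (pow_le_pow_left₀ (norm_nonneg _) h n)]
  · rw [max_eq_left h, max_eq_left (pow_le_pow_left₀ (norm_nonneg _) h n)]
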